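/- Let k be a field, 𝔬 = k[[T]], f ≥ 1, and λ : 𝔬/T^{f+1} → k a linear functional with λ(T^f) ≠ 0 (conductor exactly f). Set f' = ⌊(f+1)/2⌋ and f'' = ⌈(f+1)/2⌉. Then the stabilizer, under the multiplication action of U/U^{f+1} on linear functionals on T^{f''}𝔬/T^{f+1}𝔬, of the restriction λ|_{T^{f''}𝔬/T^{f+1}𝔬}, equals U^{f'}/U^{f+1}. -/

import Mathlib

set_option maxHeartbeats 1600000


/-- The truncated power series ring `𝔬/T^{f+1}𝔬` with `𝔬 = k[[T]]`. -/
abbrev TruncatedPS (k : Type*) [Field k] (f : ℕ) : Type _ :=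
  PowerSeries k ⧸ Ideal.span {(PowerSeries.X : PowerSeries k) ^ (f + 1)}

/-- The image `T` of the uniformizer in `𝔬/T^{f+1}𝔬`. -/
noncomputable abbrev truncT (k : Type*) [Field k] (f : ℕ) : TruncatedPS k f :=
  Ideal.Quotient.mk _ PowerSeries.X

/-- Let `k` be a field, `𝔬 = k[[T]]`, `f ≥ 1`, and
`λ : 𝔬/T^{f+1} → k` a linear functional with `λ(T^f) ≠ 0` (conductor exactly `f`).
Set `f' = ⌊(f+1)/2⌋` and `f'' = ⌈(f+1)/2⌉`.  Then the stabilizer, under the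
multiplication action of `U/U^{f+1}` on linear functionals on `T^{f''}𝔬/T^{f+1}𝔬`, of
the restriction of `λ`, equals `U^{f'}/U^{f+1}`: a unit `u` satisfies
`λ(u·v) = λ(v)` for all `v ∈ T^{f''}𝔬` if and only if `u − 1 ∈ T^{f'}𝔬`. -/
theorem stabilizer_of_restricted_functional
    (k : Type*) [Field k] (f : ℕ) (hf : 1 ≤ f)
    (lam : TruncatedPS k f →ₗ[k] k)
    (hlam : lam (truncT k f ^ f) ≠ 0) :
    ∀ u : (TruncatedPS k f)ˣ,
      (∀ v ∈ Ideal.span {truncT k f ^ ((f + 1) - (f + 1) / 2)},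
          lam ((u : TruncatedPS k f) * v) = lam v) ↔
        ((u : TruncatedPS k f) - 1) ∈ Ideal.span {truncT k f ^ ((f + 1) / 2)} := by
  intro u
  set I : Ideal (PowerSeries k) :=
    Ideal.span {(PowerSeries.X : PowerSeries k) ^ (f + 1)} with hI
  have hsurj : Function.Surjective (Ideal.Quotient.mk I) := Ideal.Quotient.mk_surjective
  have hmk_pow : ∀ m : ℕ, truncT k f ^ m =
      Ideal.Quotient.mk I ((PowerSeries.X : PowerSeries k) ^ m) := by
    intro m; rw [map_pow]
  have hmem : ∀ (m : ℕ) (x : TruncatedPS k f),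
      x ∈ Ideal.span {truncT k f ^ m} ↔
        ∃ A : PowerSeries k, x = Ideal.Quotient.mk I (PowerSeries.X ^ m * A) := by
    intro m x
    rw [Ideal.mem_span_singleton']
    constructor
    · rintro ⟨a, ha⟩
      obtain ⟨A, rfl⟩ := hsurj a
      refine ⟨A, ?_⟩
      rw [← ha, hmk_pow, ← map_mul, mul_comm]
    · rintro ⟨A, rfl⟩
      exact ⟨Ideal.Quotient.mk I A, by rw [hmk_pow, ← map_mul, mul_comm]⟩
  have hzero : ∀ n, f + 1 ≤ n →
      (Ideal.Quotient.mk I) ((PowerSeries.X : PowerSeries k) ^ n) = 0 := by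
    intro n hn
    rw [Ideal.Quotient.eq_zero_iff_mem, hI, Ideal.mem_span_singleton]
    exact pow_dvd_pow _ hn
  have hsmul : ∀ (c : k) (y : PowerSeries k),
      c • Ideal.Quotient.mk I y = Ideal.Quotient.mk I (PowerSeries.C c * y) := by
    intro c y
    rw [← PowerSeries.smul_eq_C_mul]
    rfl
  constructor
  · intro H
    obtain ⟨W, hW⟩ := hsurj ((u : TruncatedPS k f) - 1)
    have key : ∀ j, j < (f + 1) / 2 → PowerSeries.coeff j W = 0 := by
      intro j
      induction j using Nat.strong_induction_on with
      | _ j ih =>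
        intro hj
        have hvmem : (truncT k f) ^ (f - j) ∈
            Ideal.span {truncT k f ^ ((f + 1) - (f + 1) / 2)} := by
          rw [hmem]
          refine ⟨PowerSeries.X ^ (f - j - ((f + 1) - (f + 1) / 2)), ?_⟩
          rw [hmk_pow, ← pow_add, Nat.add_sub_cancel' (by omega : (f + 1) - (f + 1) / 2 ≤ f - j)]
        have h1 := H _ hvmem
        have h2 : lam (((u : TruncatedPS k f) - 1) * truncT k f ^ (f - j)) = 0 := by
          rw [sub_mul, one_mul, map_sub, h1, sub_self]
        have h3 : ((u : TruncatedPS k f) - 1) * truncT k f ^ (f - j)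
            = PowerSeries.coeff j W • truncT k f ^ f := by
          rw [← hW, hmk_pow, hmk_pow, ← map_mul, hsmul]
          rw [Ideal.Quotient.eq, hI, Ideal.mem_span_singleton]
          rw [PowerSeries.X_pow_dvd_iff]
          intro m hm
          rw [map_sub, PowerSeries.coeff_C_mul, PowerSeries.coeff_mul_X_pow',
            PowerSeries.coeff_X_pow]
          by_cases h5 : f - j ≤ m
          · by_cases h6 : m = f
            · rw [if_pos h5, if_pos h6]
              have : m - (f - j) = j := by omega
              rw [this, mul_one, sub_self]
            · rw [if_pos h5, if_neg h6, mul_zero, sub_zero]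
              exact ih (m - (f - j)) (by omega) (by omega)
          · rw [if_neg h5, if_neg (by omega), mul_zero, sub_zero]
        rw [h3, map_smul, smul_eq_mul] at h2
        exact (mul_eq_zero.mp h2).resolve_right hlam
    have hdvd : (PowerSeries.X : PowerSeries k) ^ ((f + 1) / 2) ∣ W :=
      PowerSeries.X_pow_dvd_iff.mpr fun m hm => key m hm
    obtain ⟨A, rfl⟩ := hdvd
    rw [hmem]
    exact ⟨A, hW.symm⟩
  · intro hu v hv
    obtain ⟨A, hA⟩ := (hmem _ _).mp hu
    obtain ⟨B, rfl⟩ := (hmem _ _).mp hv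
    have hz : ((u : TruncatedPS k f) - 1) * Ideal.Quotient.mk I
        (PowerSeries.X ^ ((f + 1) - (f + 1) / 2) * B) = 0 := by
      rw [hA, ← map_mul]
      have h7 : PowerSeries.X ^ ((f + 1) / 2) * A *
          (PowerSeries.X ^ ((f + 1) - (f + 1) / 2) * B)
          = PowerSeries.X ^ ((f + 1) / 2 + ((f + 1) - (f + 1) / 2)) * (A * B) := by
        rw [pow_add]; ring
      rw [h7, map_mul, hzero _ (by omega), zero_mul]
    rw [sub_mul, one_mul, sub_eq_zero] at hz
    rw [hz]
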